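/- Let Γ be a locally semicomplete commutative weakly distance-regular digraph such that (1,2) is pure. Then: (1) for all vertices x,y,z with ∂̃(x,y)=∂̃(y,z)=(1,2), one has ∂̃(x,z) ∈ {(1,2),(1,3),(2,1),(2,2)} (i.e. Γ_{1,2}² ⊆ {Γ_{1,2},Γ_{1,3},Γ_{2,1},Γ_{2,2}}); (2) for all vertices x,y,z with ∂̃(x,y)=(1,2) and ∂̃(y,z)=(2,1), one has ∂̃(x,z) ∈ {(0,0),(1,1),(1,2),(1,3),(2,1),(3,1)} (i.e. Γ_{1,2}Γ_{2,1} ⊆ {Γ_{0,0},Γ_{1,1},Γ_{1,2},Γ_{1,3},Γ_{2,1},Γ_{3,1}}). -/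
import Mathlib


variable {V : Type*}

/-- There is a directed walk of length `n` from `x` to `y` in the digraph with arc relation `A`. -/
def HasWalk (A : V → V → Prop) : ℕ → V → V → Prop
  | 0, x, y => x = y
  | n + 1, x, y => ∃ z, A x z ∧ HasWalk A n z y

/-- The distance `∂(x,y)`: the length of a shortest directed path from `x` to `y`. -/
noncomputable def ddist (A : V → V → Prop) (x y : V) : ℕ :=
  sInf {n : ℕ | HasWalk A n x y}

/-- The two-way distance `∂̃(x,y) = (∂(x,y), ∂(y,x))`. -/
noncomputable def tdist (A : V → V → Prop) (x y : V) : ℕ × ℕ :=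
  (ddist A x y, ddist A y x)

/-- The two-way distance set `∂̃(Γ)`. -/
def tset (A : V → V → Prop) : Set (ℕ × ℕ) :=
  {d : ℕ × ℕ | ∃ x y : V, tdist A x y = d}

/-- A (finite) weakly distance-regular digraph: a loopless strongly connected digraph
together with its intersection numbers `p h i j = p^{h}_{i,j}`, where
`p h i j = 0` by convention whenever one of `h`, `i`, `j` is not a two-way distance. -/
structure WDRDigraph (V : Type*) [Fintype V] where
  Adj : V → V → Prop
  loopless : ∀ v : V, ¬ Adj v v
  strongly_connected : ∀ x y : V, ∃ n : ℕ, HasWalk Adj n x y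
  p : ℕ × ℕ → ℕ × ℕ → ℕ × ℕ → ℕ
  card_inter : ∀ (i j : ℕ × ℕ) (x y : V),
    {z : V | tdist Adj x z = i ∧ tdist Adj z y = j}.ncard = p (tdist Adj x y) i j
  p_not_in : ∀ h i j : ℕ × ℕ,
    h ∉ tset Adj ∨ i ∉ tset Adj ∨ j ∉ tset Adj → p h i j = 0

variable [Fintype V]

/-- A weakly distance-regular digraph is commutative if `p^{h}_{i,j} = p^{h}_{j,i}`
for all two-way distances `h`, `i`, `j`. -/
def WDRDigraph.Commutative (G : WDRDigraph V) : Prop :=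
  ∀ h i j : ℕ × ℕ, h ∈ tset G.Adj → i ∈ tset G.Adj → j ∈ tset G.Adj →
    G.p h i j = G.p h j i

/-- A digraph is semicomplete if any two distinct vertices are joined by at least one arc. -/
def Semicomplete (A : V → V → Prop) : Prop :=
  ∀ x y : V, x ≠ y → A x y ∨ A y x

/-- A digraph is locally semicomplete if the out-neighbourhood and the in-neighbourhood of
every vertex induce semicomplete digraphs. -/
def LocallySemicomplete (A : V → V → Prop) : Prop :=
  ∀ x y z : V, y ≠ z →
    ((A x y → A x z → (A y z ∨ A z y)) ∧ (A y x → A z x → (A y z ∨ A z y)))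

/-- A circuit of length `q`, encoded as a function `ZMod q → V` each of whose
consecutive pairs (cyclically) is an arc. -/
def IsCircuit (A : V → V → Prop) (q : ℕ) (c : ZMod q → V) : Prop :=
  ∀ i : ZMod q, A (c i) (c (i + 1))

/-- The arc `(x, y)` (of type `(1, q-1)`) is pure: every circuit of length `q`
containing it consists of arcs of type `(1, q-1)`. -/
def PureArc (A : V → V → Prop) (q : ℕ) (x y : V) : Prop :=
  ∀ c : ZMod q → V, IsCircuit A q c → c 0 = x → c 1 = y →
    ∀ i : ZMod q, tdist A (c i) (c (i + 1)) = (1, q - 1)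

/-- `(1, q-1)` is pure: every arc of type `(1, q-1)` is pure. -/
def TypePure (A : V → V → Prop) (q : ℕ) : Prop :=
  ∀ x y : V, tdist A x y = (1, q - 1) → PureArc A q x y

/-- `(1, q-1)` is mixed: some arc of type `(1, q-1)` is not pure. -/
def TypeMixed (A : V → V → Prop) (q : ℕ) : Prop :=
  ∃ x y : V, tdist A x y = (1, q - 1) ∧ ¬ PureArc A q x y

/-- The number `k_i` of vertices at two-way distance `i` from `x`
(independent of `x` in a weakly distance-regular digraph). -/
noncomputable def kval (A : V → V → Prop) (i : ℕ × ℕ) (x : V) : ℕ :=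
  {y : V | tdist A x y = i}.ncard


section Statement6Aux

variable {V : Type*}

lemma hasWalk_concat (A : V → V → Prop) :
    ∀ (m : ℕ) {n : ℕ} {x y z : V}, HasWalk A m x y → HasWalk A n y z →
      HasWalk A (m + n) x z := by
  intro m
  induction m with
  | zero =>
    intro n x y z h1 h2
    have hxy : x = y := h1
    rw [Nat.zero_add, hxy]
    exact h2
  | succ k ih =>
    intro n x y z h1 h2
    obtain ⟨w, haw, hw⟩ := h1
    have hEq : k + 1 + n = (k + n) + 1 := by omega
    rw [hEq]
    exact ⟨w, haw, ih hw h2⟩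

variable {A : V → V → Prop}

lemma ddist_walk (hsc : ∀ x y : V, ∃ n, HasWalk A n x y) (x y : V) :
    HasWalk A (ddist A x y) x y :=
  Nat.sInf_mem (hsc x y)

lemma ddist_le {n : ℕ} {x y : V} (h : HasWalk A n x y) : ddist A x y ≤ n :=
  Nat.sInf_le h

lemma ddist_self (x : V) : ddist A x x = 0 :=
  Nat.le_zero.mp (ddist_le (show HasWalk A 0 x x from rfl))

lemma eq_of_ddist_eq_zero (hsc : ∀ x y : V, ∃ n, HasWalk A n x y) {x y : V}
    (h : ddist A x y = 0) : x = y := by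
  have hw := ddist_walk hsc x y
  rw [h] at hw
  exact hw

lemma ddist_ne_zero (hsc : ∀ x y : V, ∃ n, HasWalk A n x y) {x y : V}
    (h : x ≠ y) : ddist A x y ≠ 0 :=
  fun h0 => h (eq_of_ddist_eq_zero hsc h0)

lemma ddist_le_one_of_adj {x y : V} (h : A x y) : ddist A x y ≤ 1 :=
  ddist_le ⟨y, h, rfl⟩

lemma adj_of_ddist_eq_one (hsc : ∀ x y : V, ∃ n, HasWalk A n x y) {x y : V}
    (h : ddist A x y = 1) : A x y := by
  have hw := ddist_walk hsc x y
  rw [h] at hw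
  obtain ⟨w, hxw, hw0⟩ := hw
  have : w = y := hw0
  rwa [this] at hxw

lemma ddist_eq_one (hsc : ∀ x y : V, ∃ n, HasWalk A n x y) {x y : V}
    (hne : x ≠ y) (h : A x y) : ddist A x y = 1 := by
  have h1 := ddist_le_one_of_adj h
  have h0 := ddist_ne_zero hsc hne
  omega

lemma ddist_triangle (hsc : ∀ x y : V, ∃ n, HasWalk A n x y) (x y z : V) :
    ddist A x z ≤ ddist A x y + ddist A y z :=
  ddist_le (hasWalk_concat A _ (ddist_walk hsc x y) (ddist_walk hsc y z))

lemma exists_mid_of_ddist_eq_two (hsc : ∀ x y : V, ∃ n, HasWalk A n x y) {x y : V}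
    (h : ddist A x y = 2) : ∃ u, A x u ∧ A u y := by
  have hw := ddist_walk hsc x y
  rw [h] at hw
  obtain ⟨u, hxu, hw1⟩ := hw
  obtain ⟨w, huw, hw0⟩ := hw1
  have : w = y := hw0
  exact ⟨u, hxu, this ▸ huw⟩

lemma tdist_eq_iff {x y : V} {a b : ℕ} :
    tdist A x y = (a, b) ↔ ddist A x y = a ∧ ddist A y x = b := by
  simp [tdist, Prod.ext_iff]

lemma tdist_swap {x y : V} {a b : ℕ} (h : tdist A x y = (a, b)) :
    tdist A y x = (b, a) := by
  rw [tdist_eq_iff] at h ⊢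
  exact ⟨h.2, h.1⟩

/-- Applying purity of `(1,2)` to a `3`-circuit `a → b → c → a` whose first arc has
type `(1,2)`. -/
lemma pure_circuit (hpure : TypePure A 3) {a b c : V}
    (hab : tdist A a b = (1, 2)) (h1 : A a b) (h2 : A b c) (h3 : A c a) :
    tdist A b c = (1, 2) ∧ tdist A c a = (1, 2) := by
  classical
  set f : ZMod 3 → V := fun i => if i = 0 then a else if i = 1 then b else c with hf
  have hf0 : f 0 = a := by simp [hf]
  have hf1 : f 1 = b := by simp [hf]
  have hf2 : f 2 = c := by
    show (if (2 : ZMod 3) = 0 then a else if (2 : ZMod 3) = 1 then b else c) = c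
    rw [if_neg (by decide), if_neg (by decide)]
  have hcirc : IsCircuit A 3 f := by
    intro i
    have hi := (by decide : ∀ j : ZMod 3, j = 0 ∨ j = 1 ∨ j = 2) i
    rcases hi with hi | hi | hi <;> subst hi
    · rw [show ((0 : ZMod 3) + 1) = 1 from by decide, hf0, hf1]; exact h1
    · rw [show ((1 : ZMod 3) + 1) = 2 from by decide, hf1, hf2]; exact h2
    · rw [show ((2 : ZMod 3) + 1) = 0 from by decide, hf2, hf0]; exact h3
  have hab' : tdist A a b = (1, 3 - 1) := by rw [hab]
  have key := hpure a b hab' f hcirc hf0 hf1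
  constructor
  · have := key 1
    rw [show ((1 : ZMod 3) + 1) = 2 from by decide, hf1, hf2] at this
    rw [this]
  · have := key 2
    rw [show ((2 : ZMod 3) + 1) = 0 from by decide, hf2, hf0] at this
    rw [this]

variable [Fintype V]

/-- Transfer a witness of the intersection configuration `(i,j)` from a pair to any
other pair with the same two-way distance, using weak distance-regularity. -/
lemma count_transfer (G : WDRDigraph V) {a b a' b' : V}
    (hab : tdist G.Adj a b = tdist G.Adj a' b') (i j : ℕ × ℕ) (w₀ : V)
    (h1 : tdist G.Adj a w₀ = i) (h2 : tdist G.Adj w₀ b = j) :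
    ∃ w, tdist G.Adj a' w = i ∧ tdist G.Adj w b' = j := by
  have c1 := G.card_inter i j a b
  have c2 := G.card_inter i j a' b'
  rw [hab] at c1
  have hpos : 0 < ({z : V | tdist G.Adj a z = i ∧ tdist G.Adj z b = j}).ncard :=
    (Set.ncard_pos (Set.toFinite _)).2 ⟨w₀, h1, h2⟩
  rw [c1, ← c2] at hpos
  obtain ⟨w, hw⟩ := (Set.ncard_pos (Set.toFinite _)).1 hpos
  exact ⟨w, hw.1, hw.2⟩

end Statement6Aux

/-- in a locally semicomplete commutative weakly distance-regular digraph such that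
`(1,2)` is pure: (1) `Γ_{1,2}² ⊆ {Γ_{1,2},Γ_{1,3},Γ_{2,1},Γ_{2,2}}`;
(2) `Γ_{1,2}Γ_{2,1} ⊆ {Γ_{0,0},Γ_{1,1},Γ_{1,2},Γ_{1,3},Γ_{2,1},Γ_{3,1}}`. -/
theorem statement6 [Nonempty V] (G : WDRDigraph V)
    (hls : LocallySemicomplete G.Adj) (hcomm : G.Commutative)
    (hpure : TypePure G.Adj 3) :
    (∀ x y z : V, tdist G.Adj x y = (1, 2) → tdist G.Adj y z = (1, 2) →
      tdist G.Adj x z ∈ ({(1, 2), (1, 3), (2, 1), (2, 2)} : Set (ℕ × ℕ))) ∧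
    (∀ x y z : V, tdist G.Adj x y = (1, 2) → tdist G.Adj y z = (2, 1) →
      tdist G.Adj x z ∈
        ({(0, 0), (1, 1), (1, 2), (1, 3), (2, 1), (3, 1)} : Set (ℕ × ℕ))) := by
  classical
  have hsc := G.strongly_connected
  have hloop := G.loopless
  constructor
  · -- Part (1): Γ_{1,2}Γ_{1,2} ⊆ {Γ_{1,2}, Γ_{1,3}, Γ_{2,1}, Γ_{2,2}}
    intro x y z hxy hyz
    obtain ⟨dxy, dyx⟩ := tdist_eq_iff.mp hxy
    obtain ⟨dyz, dzy⟩ := tdist_eq_iff.mp hyz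
    have haxy : G.Adj x y := adj_of_ddist_eq_one hsc dxy
    have hayz : G.Adj y z := adj_of_ddist_eq_one hsc dyz
    have hxz_ne : x ≠ z := by
      intro h
      rw [h] at dyx
      omega
    have hdxz_le : ddist G.Adj x z ≤ 2 := by
      have := ddist_triangle hsc x y z
      omega
    have hdxz_pos : ddist G.Adj x z ≠ 0 := ddist_ne_zero hsc hxz_ne
    -- the vertex u on a shortest path y → u → x; purity types the circuit (x, y, u)
    obtain ⟨u, hyu, hux⟩ := exists_mid_of_ddist_eq_two hsc dyx
    obtain ⟨hTyu, hTux⟩ := pure_circuit hpure hxy haxy hyu hux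
    obtain ⟨dyu, duy⟩ := tdist_eq_iff.mp hTyu
    obtain ⟨dux, dxu⟩ := tdist_eq_iff.mp hTux
    by_cases hzx1 : ddist G.Adj z x = 1
    · -- arc z → x: purity on the circuit (x, y, z) gives ∂̃(x,z) = (2,1)
      have hazx : G.Adj z x := adj_of_ddist_eq_one hsc hzx1
      have := (pure_circuit hpure hxy haxy hayz hazx).2
      have hval : tdist G.Adj x z = (2, 1) := tdist_swap this
      rw [hval]; simp
    · have hzx_ge : 2 ≤ ddist G.Adj z x := by
        have := ddist_ne_zero hsc (Ne.symm hxz_ne)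
        omega
      have huz_ne : u ≠ z := by
        intro h
        rw [h] at hux
        have := ddist_le_one_of_adj hux
        omega
      by_cases hazu : G.Adj z u
      · -- arc z → u gives ∂(z,x) = 2
        have hzx2 : ddist G.Adj z x = 2 := by
          have h1 := ddist_triangle hsc z u x
          have h2 := ddist_le_one_of_adj hazu
          omega
        have h1 : ddist G.Adj x z = 1 ∨ ddist G.Adj x z = 2 := by omega
        rcases h1 with h1 | h1
        · have hval : tdist G.Adj x z = (1, 2) := tdist_eq_iff.mpr ⟨h1, hzx2⟩
          rw [hval]; simp
        · have hval : tdist G.Adj x z = (2, 2) := tdist_eq_iff.mpr ⟨h1, hzx2⟩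
          rw [hval]; simp
      · -- the hard branch: u → z, ¬(z → u)
        have hauz : G.Adj u z := by
          rcases (hls y u z huz_ne).1 hyu hayz with h | h
          · exact h
          · exact absurd h hazu
        have duz : ddist G.Adj u z = 1 := ddist_eq_one hsc huz_ne hauz
        have ht2 : 2 ≤ ddist G.Adj z u := by
          have h0 := ddist_ne_zero hsc (Ne.symm huz_ne)
          have h1 : ddist G.Adj z u ≠ 1 := fun h => hazu (adj_of_ddist_eq_one hsc h)
          omega
        -- t := ∂(z, u) ≤ 3
        have ht3 : ddist G.Adj z u ≤ 3 := by
          have := ddist_triangle hsc z y u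
          omega
        have hTxu : tdist G.Adj x u = (2, 1) := tdist_swap hTux
        have hTuz : tdist G.Adj u z = (1, ddist G.Adj z u) := tdist_eq_iff.mpr ⟨duz, rfl⟩
        -- commutativity: swap the witness u to get w with x → w and z → w
        have hmem_h : tdist G.Adj x z ∈ tset G.Adj := ⟨x, z, rfl⟩
        have hmem_i : ((1 : ℕ), ddist G.Adj z u) ∈ tset G.Adj := ⟨u, z, hTuz⟩
        have hmem_j : ((2 : ℕ), (1 : ℕ)) ∈ tset G.Adj := ⟨x, u, hTxu⟩
        have hcm := hcomm (tdist G.Adj x z) (1, ddist G.Adj z u) (2, 1) hmem_h hmem_i hmem_j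
        have c1 := G.card_inter (2, 1) (1, ddist G.Adj z u) x z
        have c2 := G.card_inter (1, ddist G.Adj z u) (2, 1) x z
        have hpos : 0 < ({w : V | tdist G.Adj x w = (1, ddist G.Adj z u) ∧
            tdist G.Adj w z = (2, 1)}).ncard := by
          rw [c2, hcm, ← c1]
          exact (Set.ncard_pos (Set.toFinite _)).2 ⟨u, hTxu, hTuz⟩
        obtain ⟨w, hw1, hw2⟩ := (Set.ncard_pos (Set.toFinite _)).1 hpos
        have haxw : G.Adj x w := adj_of_ddist_eq_one hsc (tdist_eq_iff.mp hw1).1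
        have hazw : G.Adj z w := adj_of_ddist_eq_one hsc (tdist_eq_iff.mp hw2).2
        have haxz : G.Adj x z := by
          rcases (hls w x z hxz_ne).2 haxw hazw with h | h
          · exact h
          · exact absurd (ddist_le_one_of_adj h) (by omega)
        have dxz1 : ddist G.Adj x z = 1 := ddist_eq_one hsc hxz_ne haxz
        have hb_le : ddist G.Adj z x ≤ ddist G.Adj z u + 1 := by
          have := ddist_triangle hsc z u x
          omega
        have hb : ddist G.Adj z x = 2 ∨ ddist G.Adj z x = 3 ∨ ddist G.Adj z x = 4 := by
          omega
        rcases hb with hb | hb | hb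
        · have hval : tdist G.Adj x z = (1, 2) := tdist_eq_iff.mpr ⟨dxz1, hb⟩
          rw [hval]; simp
        · have hval : tdist G.Adj x z = (1, 3) := tdist_eq_iff.mpr ⟨dxz1, hb⟩
          rw [hval]; simp
        · -- ∂̃(x,z) = (1,4): derive a contradiction by a counting argument
          exfalso
          have htz : ddist G.Adj z u = 3 := by omega
          have hTuz3 : tdist G.Adj u z = (1, 3) := by rw [hTuz, htz]
          have hTxz : tdist G.Adj x z = (1, 4) := tdist_eq_iff.mpr ⟨dxz1, hb⟩
          have hTyx : tdist G.Adj y x = (2, 1) := tdist_swap hxy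
          have hTzy : tdist G.Adj z y = (2, 1) := tdist_swap hyz
          have hTuy : tdist G.Adj u y = (2, 1) := tdist_swap hTyu
          set M : Set V := {m : V | tdist G.Adj z m = (1, 2) ∧ tdist G.Adj m y = (1, 2)}
            with hM
          set M' : Set V := {m : V | tdist G.Adj u m = (1, 2) ∧ tdist G.Adj m y = (1, 2)}
            with hM'
          -- M ⊆ M'
          have hsub : M ⊆ M' := by
            rintro m ⟨hzm, hmy⟩
            -- transfer the configuration (x witnesses p^{(1,2)}_{(2,1),(1,4)} at (y,z))
            -- to the pair (m, y), obtaining a gadget vertex w'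
            obtain ⟨w', hw'1, hw'2⟩ := count_transfer G
              (show tdist G.Adj y z = tdist G.Adj m y by rw [hyz, hmy])
              (2, 1) (1, 4) x hTyx hTxz
            have haw'm : G.Adj w' m := adj_of_ddist_eq_one hsc (tdist_eq_iff.mp hw'1).2
            have haw'y : G.Adj w' y := adj_of_ddist_eq_one hsc (tdist_eq_iff.mp hw'2).1
            have dyw' : ddist G.Adj y w' = 4 := (tdist_eq_iff.mp hw'2).2
            -- arc w' → x
            have hw'x_ne : w' ≠ x := by
              intro h
              rw [h] at dyw'
              omega
            have haw'x : G.Adj w' x := by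
              rcases (hls y w' x hw'x_ne).2 haw'y haxy with h | h
              · exact h
              · exfalso
                have h1 := ddist_triangle hsc y x w'
                have h2 := ddist_le_one_of_adj h
                omega
            -- arc w' → u
            have huw'_ne : u ≠ w' := by
              intro h
              rw [← h] at dyw'
              omega
            have haw'u : G.Adj w' u := by
              rcases (hls x u w' huw'_ne).2 hux haw'x with h | h
              · exfalso
                have h1 := ddist_triangle hsc y u w'
                have h2 := ddist_le_one_of_adj h
                omega
              · exact h
            -- ¬ (m → u), by purity of the circuit (z, m, u)
            have hnmu : ¬ G.Adj m u := by
              intro hmu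
              have hazm : G.Adj z m := adj_of_ddist_eq_one hsc (tdist_eq_iff.mp hzm).1
              have := (pure_circuit hpure hzm hazm hmu hauz).2
              rw [hTuz3] at this
              exact absurd this (by simp)
            -- arc u → m via the common in-neighbourhood of w'
            have hum_ne : u ≠ m := by
              intro h
              rw [← h] at hzm
              have := (tdist_eq_iff.mp hzm).2
              omega
            have haum : G.Adj u m := by
              rcases (hls w' u m hum_ne).1 haw'u haw'm with h | h
              · exact h
              · exact absurd h hnmu
            -- purity of the circuit (m, y, u) types (u, m)
            have hamy : G.Adj m y := adj_of_ddist_eq_one hsc (tdist_eq_iff.mp hmy).1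
            have := (pure_circuit hpure hmy hamy hyu haum).2
            exact ⟨this, hmy⟩
          -- x ∈ M' \ M
          have hxM' : x ∈ M' := ⟨hTux, hxy⟩
          have hxM : x ∉ M := by
            rintro ⟨hzx', -⟩
            have := (tdist_eq_iff.mp hzx').1
            omega
          -- but M and M' have the same cardinality p^{(2,1)}_{(1,2),(1,2)}
          have cM := G.card_inter (1, 2) (1, 2) z y
          have cM' := G.card_inter (1, 2) (1, 2) u y
          rw [hTzy] at cM
          rw [hTuy] at cM'
          have hlt : M.ncard < M'.ncard :=
            Set.ncard_lt_ncard ((Set.ssubset_iff_of_subset hsub).2 ⟨x, hxM', hxM⟩)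
              (Set.toFinite _)
          rw [hM, hM', cM, cM'] at hlt
          omega
  · -- Part (2): Γ_{1,2}Γ_{2,1} ⊆ {Γ_{0,0}, Γ_{1,1}, Γ_{1,2}, Γ_{1,3}, Γ_{2,1}, Γ_{3,1}}
    intro x y z hxy hyz
    obtain ⟨dxy, dyx⟩ := tdist_eq_iff.mp hxy
    obtain ⟨dyz, dzy⟩ := tdist_eq_iff.mp hyz
    by_cases hxz : x = z
    · have hval : tdist G.Adj x z = (0, 0) := by
        rw [← hxz]
        exact tdist_eq_iff.mpr ⟨ddist_self x, ddist_self x⟩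
      rw [hval]; simp
    · have haxy : G.Adj x y := adj_of_ddist_eq_one hsc dxy
      have hazy : G.Adj z y := adj_of_ddist_eq_one hsc dzy
      have hdxz : ddist G.Adj x z ≤ 3 := by
        have := ddist_triangle hsc x y z
        omega
      have hdzx : ddist G.Adj z x ≤ 3 := by
        have := ddist_triangle hsc z y x
        omega
      have hdxz0 := ddist_ne_zero hsc hxz
      have hdzx0 := ddist_ne_zero hsc (Ne.symm hxz)
      rcases (hls y x z hxz).2 haxy hazy with h | h
      · have h1 : ddist G.Adj x z = 1 := ddist_eq_one hsc hxz h
        have hb : ddist G.Adj z x = 1 ∨ ddist G.Adj z x = 2 ∨ ddist G.Adj z x = 3 := by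
          omega
        rcases hb with hb | hb | hb <;>
          · rw [tdist_eq_iff.mpr ⟨h1, hb⟩]; simp
      · have h1 : ddist G.Adj z x = 1 := ddist_eq_one hsc (Ne.symm hxz) h
        have hb : ddist G.Adj x z = 1 ∨ ddist G.Adj x z = 2 ∨ ddist G.Adj x z = 3 := by
          omega
        rcases hb with hb | hb | hb <;>
          · rw [tdist_eq_iff.mpr ⟨hb, h1⟩]; simp
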